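/- Let p, q be positive integers and G a graph containing an induced subgraph H such that: (1) every maximal clique K of G contains at least p − (ω(G) − |K|) vertices of H, and (2) H is q-colorable. If χ(G − V(H)) ≤ ⌈(q/p)·ω(G − V(H))⌉, then χ(G) ≤ ⌈(q/p)·ω(G)⌉. -/

import Mathlib

open SimpleGraph

/-- A maximal clique of `G`: a clique contained in no strictly larger clique. -/
def IsMaximalClique {V : Type*} (G : SimpleGraph V) (K : Finset V) : Prop :=
  G.IsClique (K : Set V) ∧ ∀ K' : Finset V, G.IsClique (K' : Set V) → K ⊆ K' → K' = K

lemma exists_maximal_clique_superset {V : Type*} [Fintype V] [DecidableEq V]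
    (G : SimpleGraph V) (C : Finset V) (hC : G.IsClique (C : Set V)) :
    ∃ K, IsMaximalClique G K ∧ C ⊆ K := by
  classical
  -- pick a clique containing C of maximal cardinality
  obtain ⟨K, hK, hmax⟩ := Finset.exists_max_image
    ((Finset.univ : Finset (Finset V)).filter fun K : Finset V => G.IsClique (K : Set V) ∧ C ⊆ K)
    Finset.card ⟨C, by simp [hC]⟩
  simp only [Finset.mem_filter, Finset.mem_univ, true_and] at hK hmax
  refine ⟨K, ⟨hK.1, fun K' hK' hsub => ?_⟩, hK.2⟩
  have := hmax K' ⟨hK', hK.2.trans hsub⟩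
  exact (Finset.eq_of_subset_of_card_le hsub this).symm

theorem stmt_6 {V : Type*} [Fintype V] [DecidableEq V] (G : SimpleGraph V)
    (p q : ℕ) (hp : 0 < p) (hq : 0 < q) (S : Finset V)
    (hgood : ∀ K : Finset V, IsMaximalClique G K →
      p + K.card ≤ (K ∩ S).card + G.cliqueNum)
    (hqcol : (G.induce (S : Set V)).Colorable q)
    (hrest : (G.induce ((S : Set V)ᶜ)).Colorable
      ⌈(q * (G.induce ((S : Set V)ᶜ)).cliqueNum : ℚ) / p⌉₊) :
    G.Colorable ⌈(q * G.cliqueNum : ℚ) / p⌉₊ := by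
  classical
  set G' := G.induce ((S : Set V)ᶜ)
  set m := ⌈(q * G'.cliqueNum : ℚ) / p⌉₊
  -- Step 1: ω(G') + p ≤ ω(G)
  have hcl : G'.cliqueNum + p ≤ G.cliqueNum := by
    obtain ⟨t, ht⟩ := G'.exists_isNClique_cliqueNum
    set C : Finset V := t.image Subtype.val with hCdef
    have hCcard : C.card = G'.cliqueNum := by
      rw [hCdef, Finset.card_image_of_injective _ Subtype.val_injective, ht.card_eq]
    have hCS : ∀ v ∈ C, v ∉ S := by
      intro v hv
      obtain ⟨⟨w, hw⟩, _, rfl⟩ := Finset.mem_image.mp hv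
      simpa using hw
    have hCclique : G.IsClique (C : Set V) := by
      intro a ha b hb hab
      obtain ⟨⟨a', ha'⟩, hat, rfl⟩ := Finset.mem_image.mp ha
      obtain ⟨⟨b', hb'⟩, hbt, rfl⟩ := Finset.mem_image.mp hb
      exact ht.isClique hat hbt (by simpa using hab)
    obtain ⟨K, hKmax, hCK⟩ := exists_maximal_clique_superset G C hCclique
    have hdisj : Disjoint C (K ∩ S) := by
      rw [Finset.disjoint_left]
      intro v hv hv'
      exact hCS v hv (Finset.mem_inter.mp hv').2
    have hunion : C.card + (K ∩ S).card ≤ K.card := by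
      rw [← Finset.card_union_of_disjoint hdisj]
      exact Finset.card_le_card (Finset.union_subset hCK Finset.inter_subset_left)
    have := hgood K hKmax
    omega
  -- Step 2: combine colorings into q + m colors
  obtain ⟨c1⟩ := hqcol
  obtain ⟨c2⟩ := hrest
  have hcol : G.Colorable (q + m) := by
    have C : G.Coloring (Fin q ⊕ Fin m) := by
      refine Coloring.mk (fun v => if h : v ∈ S then Sum.inl (c1 ⟨v, h⟩)
        else Sum.inr (c2 ⟨v, by simpa using h⟩)) ?_
      intro a b hab hcon
      by_cases ha : a ∈ S <;> by_cases hb : b ∈ S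
      · rw [dif_pos ha, dif_pos hb] at hcon
        exact c1.valid (show (G.induce (S : Set V)).Adj ⟨a, ha⟩ ⟨b, hb⟩ from hab) (Sum.inl.inj hcon)
      · rw [dif_pos ha, dif_neg hb] at hcon
        exact Sum.inl_ne_inr hcon
      · rw [dif_neg ha, dif_pos hb] at hcon
        exact Sum.inr_ne_inl hcon
      · rw [dif_neg ha, dif_neg hb] at hcon
        exact c2.valid (show G'.Adj ⟨a, by simpa using ha⟩ ⟨b, by simpa using hb⟩ from hab) (Sum.inr.inj hcon)
    simpa using C.colorable
  refine hcol.mono ?_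
  -- Step 3: q + m ≤ ⌈q ω / p⌉
  have hp' : (0:ℚ) < p := by exact_mod_cast hp
  have key : (q * G'.cliqueNum : ℚ) / p + q ≤ (q * G.cliqueNum : ℚ) / p := by
    rw [div_add' _ _ _ hp'.ne', div_le_div_iff_of_pos_right hp']
    have : (G'.cliqueNum : ℚ) + p ≤ G.cliqueNum := by exact_mod_cast hcl
    nlinarith
  have h0 : (0:ℚ) ≤ (q * G'.cliqueNum : ℚ) / p := by positivity
  calc q + m = ⌈(q * G'.cliqueNum : ℚ) / p + q⌉₊ := by
        rw [Nat.ceil_add_natCast h0]; omega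
    _ ≤ _ := Nat.ceil_le_ceil key
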